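/- Let X be a nontrivial circulant p-graph. For every i ∈ Z_p, the map Φ_i : E → Aut_i(X) sending e ∈ E to the permutation x ↦ i + e(x − i) of Z_p is a group isomorphism from E onto the stabilizer Aut_i(X) of the vertex i in Aut(X). -/

import Mathlib

/-- `σ` is an automorphism of the graph `X`. -/
def IsCircAut {p : ℕ} (X : SimpleGraph (ZMod p)) (σ : Equiv.Perm (ZMod p)) : Prop :=
  ∀ i j : ZMod p, X.Adj (σ i) (σ j) ↔ X.Adj i j

/-- The affine permutation `x ↦ i + a·(x − i)` of `Z_p` attached to a unit `a`. -/
noncomputable def Phi {p : ℕ} [Fact p.Prime] (i : ZMod p) (a : (ZMod p)ˣ) :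
    Equiv.Perm (ZMod p) :=
  (Equiv.subRight i).trans ((Equiv.mulLeft₀ (a : ZMod p) a.ne_zero).trans (Equiv.addLeft i))



open Finset

namespace C10

/-- monomial function -/
def mu (p : ℕ) (d : ℕ) : ZMod p → ZMod p := fun x => x ^ d

lemma mu_mul (p a b : ℕ) : (mu p a) * mu p b = mu p (a + b) := by
  funext x
  simp [mu, pow_add]

/-- span of monomials of degree < k -/
def V (p : ℕ) (k : ℕ) : Submodule (ZMod p) (ZMod p → ZMod p) :=
  Submodule.span (ZMod p) (mu p '' Set.Iio k)

lemma mu_mem_V {p d k : ℕ} (h : d < k) : (mu p d) ∈ V p k :=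
  Submodule.subset_span ⟨d, h, rfl⟩

lemma V_mono {p i j : ℕ} (h : i ≤ j) : V p i ≤ V p j :=
  Submodule.span_mono (Set.image_mono fun _ hx => lt_of_lt_of_le hx h)

variable {p : ℕ} [hp : Fact p.Prime]

lemma psum_zero {e : ℕ} (he : e ≠ 0) (hd : ¬ (p - 1) ∣ e) :
    ∑ x : ZMod p, x ^ e = 0 := by
  have hp2 : 2 ≤ p := hp.out.two_le
  set e' := e % (p - 1) with he'
  have he'lt : e' < p - 1 := Nat.mod_lt _ (by omega)
  have he'0 : e' ≠ 0 := fun h => hd (Nat.dvd_of_mod_eq_zero h)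
  have : ∀ x : ZMod p, x ^ e = x ^ e' := by
    intro x
    by_cases hx : x = 0
    · subst hx; rw [zero_pow he, zero_pow he'0]
    · conv_lhs => rw [← Nat.div_add_mod e (p - 1)]
      rw [pow_add, pow_mul, ZMod.pow_card_sub_one_eq_one hx, one_pow, one_mul]
  rw [Finset.sum_congr rfl fun x _ => this x]
  exact FiniteField.sum_pow_lt_card_sub_one (K := ZMod p) e' (by rwa [ZMod.card])

lemma psum_neg_one {e : ℕ} (he : e ≠ 0) (hd : (p - 1) ∣ e) :
    ∑ x : ZMod p, x ^ e = -1 := by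
  have hp2 : 2 ≤ p := hp.out.two_le
  have h1 : ∀ x : ZMod p, x ^ e = 1 - (if x = 0 then 1 else 0) := by
    intro x
    by_cases hx : x = 0
    · simp [hx, zero_pow he]
    · obtain ⟨c, rfl⟩ := hd
      simp [hx, pow_mul, ZMod.pow_card_sub_one_eq_one hx]
  rw [Finset.sum_congr rfl fun x _ => h1 x, Finset.sum_sub_distrib,
    Finset.sum_const, Finset.sum_ite_eq' Finset.univ (0 : ZMod p) (fun _ => (1 : ZMod p))]
  simp only [Finset.mem_univ, if_true, Finset.card_univ, ZMod.card]
  rw [nsmul_eq_mul, ZMod.natCast_self, mul_one, zero_sub]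


def pair (f g : ZMod p → ZMod p) : ZMod p := ∑ x : ZMod p, f x * g x

lemma pair_comm (f g : ZMod p → ZMod p) : pair f g = pair g f := by
  unfold pair; exact Finset.sum_congr rfl fun x _ => mul_comm _ _

lemma pair_add_left (f g h : ZMod p → ZMod p) : pair (f + g) h = pair f h + pair g h := by
  unfold pair; rw [← Finset.sum_add_distrib]; exact Finset.sum_congr rfl fun x _ => by
    simp [add_mul]

lemma pair_smul_left (c : ZMod p) (f g : ZMod p → ZMod p) : pair (c • f) g = c * pair f g := by
  unfold pair; rw [Finset.mul_sum]; exact Finset.sum_congr rfl fun x _ => by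
    simp [mul_assoc]

lemma pair_add_right (f g h : ZMod p → ZMod p) : pair f (g + h) = pair f g + pair f h := by
  rw [pair_comm, pair_add_left, pair_comm g f, pair_comm h f]

lemma pair_smul_right (c : ZMod p) (f g : ZMod p → ZMod p) : pair f (c • g) = c * pair f g := by
  rw [pair_comm, pair_smul_left, pair_comm g f]

def perp (W : Submodule (ZMod p) (ZMod p → ZMod p)) : Submodule (ZMod p) (ZMod p → ZMod p) where
  carrier := {f | ∀ g ∈ W, pair f g = 0}
  add_mem' := by
    intro a b ha hb g hg
    rw [pair_add_left, ha g hg, hb g hg, add_zero]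
  zero_mem' := by
    intro g hg
    unfold pair; simp
  smul_mem' := by
    intro c f hf g hg
    rw [pair_smul_left, hf g hg, mul_zero]

lemma mem_perp {W : Submodule (ZMod p) (ZMod p → ZMod p)} {f : ZMod p → ZMod p} :
    f ∈ perp W ↔ ∀ g ∈ W, pair f g = 0 := Iff.rfl

/-- membership in perp of a span can be checked on generators -/
lemma mem_perp_span {t : Set (ZMod p → ZMod p)} {f : ZMod p → ZMod p}
    (h : ∀ g ∈ t, pair f g = 0) : f ∈ perp (Submodule.span (ZMod p) t) := by
  intro g hg
  induction hg using Submodule.span_induction with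
  | mem g hg => exact h g hg
  | zero => unfold pair; simp
  | add a b _ _ ha hb => rw [pair_add_right, ha, hb, add_zero]
  | smul c a _ ha => rw [pair_smul_right, ha, mul_zero]


lemma pair_mu_eq_psum (a b : ℕ) : pair (mu p a) (mu p b) = ∑ x : ZMod p, x ^ (a + b) := by
  unfold pair mu; exact Finset.sum_congr rfl fun x _ => (pow_add x a b).symm

lemma pair_mu_small {a b : ℕ} (h : a + b ≤ p - 2) : pair (mu p a) (mu p b) = 0 := by
  have hp2 : 2 ≤ p := hp.out.two_le
  rw [pair_mu_eq_psum]
  rcases Nat.eq_zero_or_pos (a + b) with h0 | h0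
  · rw [h0]; simp only [pow_zero]
    rw [Finset.sum_const, Finset.card_univ, ZMod.card, nsmul_eq_mul, ZMod.natCast_self, mul_one]
  · apply psum_zero (by omega)
    intro hdvd
    have := Nat.le_of_dvd h0 hdvd
    omega

lemma pair_sum_left {ι : Type*} (s : Finset ι) (F : ι → (ZMod p → ZMod p)) (g : ZMod p → ZMod p) :
    pair (∑ d ∈ s, F d) g = ∑ d ∈ s, pair (F d) g := by
  unfold pair
  rw [Finset.sum_comm (s := s)]
  · exact Finset.sum_congr rfl fun x _ => by rw [Finset.sum_apply, Finset.sum_mul]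

lemma delta_mem (y : ZMod p) : (fun x => 1 - (x - y) ^ (p - 1)) ∈ V p p := by
  have hp2 : 2 ≤ p := hp.out.two_le
  have hrw : (fun x : ZMod p => 1 - (x - y) ^ (p - 1)) =
      mu p 0 - ∑ k ∈ Finset.range p, (((p-1).choose k : ZMod p) * (-y) ^ (p - 1 - k)) • mu p k := by
    funext x
    have hpow : (x - y) ^ (p - 1) = ∑ k ∈ Finset.range p, x ^ k * (-y) ^ (p - 1 - k) * ((p-1).choose k : ZMod p) := by
      rw [sub_eq_add_neg, add_pow]
      have : p - 1 + 1 = p := by omega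
      rw [this]
    simp only [Pi.sub_apply, Finset.sum_apply, Pi.smul_apply, smul_eq_mul, mu, pow_zero, hpow]
    congr 1
    exact Finset.sum_congr rfl fun k _ => by ring
  rw [hrw]
  exact sub_mem (mu_mem_V (by omega)) (Submodule.sum_mem _ fun k hk =>
    Submodule.smul_mem _ _ (mu_mem_V (Finset.mem_range.mp hk)))

lemma top_le_V (f : ZMod p → ZMod p) : f ∈ V p p := by
  have hp2 : 2 ≤ p := hp.out.two_le
  have hrw : f = ∑ y : ZMod p, f y • (fun x => 1 - (x - y) ^ (p - 1)) := by
    funext x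
    rw [Finset.sum_apply]
    rw [Finset.sum_eq_single x]
    · simp only [Pi.smul_apply, smul_eq_mul, sub_self]
      rw [zero_pow (by omega : p - 1 ≠ 0)]
      ring
    · intro y _ hyx
      have : x - y ≠ 0 := sub_ne_zero_of_ne (Ne.symm hyx)
      simp only [Pi.smul_apply, smul_eq_mul]
      rw [ZMod.pow_card_sub_one_eq_one this]
      ring
    · intro hx; exact absurd (Finset.mem_univ x) hx
  rw [hrw]
  exact Submodule.sum_mem _ fun y _ => Submodule.smul_mem _ _ (delta_mem y)

lemma V_mul {i j : ℕ} (hi : 1 ≤ i) (hj : 1 ≤ j) : (V p i) * (V p j) = V p (i + j - 1) := by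
  unfold V
  rw [Submodule.span_mul_span]
  apply le_antisymm
  · rw [Submodule.span_le]
    rintro z hz
    obtain ⟨f, hf, g, hg, rfl⟩ := Set.mem_mul.mp hz
    obtain ⟨a, ha, rfl⟩ := hf
    obtain ⟨b, hb, rfl⟩ := hg
    rw [mu_mul]
    exact SetLike.mem_coe.mpr (Submodule.subset_span ⟨a + b, by
      simp only [Set.mem_Iio] at ha hb ⊢; omega, rfl⟩)
  · rw [Submodule.span_le]
    rintro _ ⟨c, hc, rfl⟩
    simp only [Set.mem_Iio] at hc
    rcases Nat.lt_or_ge c i with hci | hci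
    · have hm1 : c ∈ Set.Iio i := by simp only [Set.mem_Iio]; omega
      have hm2 : 0 ∈ Set.Iio j := by simp only [Set.mem_Iio]; omega
      have hab : mu p c = mu p c * mu p 0 := by rw [mu_mul, Nat.add_zero]
      rw [hab]
      exact SetLike.mem_coe.mpr (Submodule.subset_span (Set.mul_mem_mul
        ⟨c, hm1, rfl⟩ ⟨0, hm2, rfl⟩))
    · have hm1 : i - 1 ∈ Set.Iio i := by simp only [Set.mem_Iio]; omega
      have hm2 : c - (i-1) ∈ Set.Iio j := by simp only [Set.mem_Iio]; omega
      have hix : i - 1 + (c - (i-1)) = c := by omega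
      have hab : mu p c = mu p (i-1) * mu p (c - (i-1)) := by rw [mu_mul, hix]
      rw [hab]
      exact SetLike.mem_coe.mpr (Submodule.subset_span (Set.mul_mem_mul
        ⟨i-1, hm1, rfl⟩ ⟨c - (i-1), hm2, rfl⟩))

lemma V_le_perp {k l : ℕ} (hkl : k + l ≤ p) : V p l ≤ perp (V p k) := by
  refine Submodule.span_le.mpr ?_
  rintro _ ⟨a, ha, rfl⟩
  refine SetLike.mem_coe.mpr (mem_perp_span ?_)
  rintro _ ⟨b, hb, rfl⟩
  simp only [Set.mem_Iio] at ha hb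
  exact pair_mu_small (by omega)

lemma perp_V_le {k : ℕ} (hk1 : 1 ≤ k) (hk2 : k ≤ p - 1) : perp (V p k) ≤ V p (p - k) := by
  have hp2 : 2 ≤ p := hp.out.two_le
  intro f hf
  have hsplit : f ∈ V p (p - k) ⊔ Submodule.span (ZMod p) (mu p '' Set.Ico (p-k) p) := by
    have h1 : V p p ≤ V p (p - k) ⊔ Submodule.span (ZMod p) (mu p '' Set.Ico (p-k) p) := by
      unfold V
      rw [← Submodule.span_union, ← Set.image_union]
      apply Submodule.span_mono
      apply Set.image_mono
      intro d hd
      simp only [Set.mem_Iio, Set.mem_union, Set.mem_Ico] at hd ⊢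
      omega
    exact h1 (top_le_V f)
  obtain ⟨g, hg, h, hh, rfl⟩ := Submodule.mem_sup.mp hsplit
  obtain ⟨l, hlsupp, rfl⟩ := (Finsupp.mem_span_image_iff_linearCombination _).mp hh
  rw [Finsupp.mem_supported] at hlsupp
  have hl0 : ∀ d0 ∈ l.support, l d0 = 0 := by
    intro d0 hd0
    have hd0' : p - k ≤ d0 ∧ d0 < p := by
      have := hlsupp hd0; simpa [Set.mem_Ico] using this
    have hmem : mu p (p - 1 - d0) ∈ V p k := mu_mem_V (by omega)
    have key : pair (g + Finsupp.linearCombination (ZMod p) (mu p) l) (mu p (p-1-d0)) = 0 :=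
      (mem_perp.mp hf) _ hmem
    have hgz : pair g (mu p (p-1-d0)) = 0 :=
      (mem_perp.mp (V_le_perp (by omega) hg)) _ hmem
    have hlc : pair (Finsupp.linearCombination (ZMod p) (mu p) l) (mu p (p-1-d0))
        = l d0 * (-1) := by
      rw [Finsupp.linearCombination_apply, Finsupp.sum, pair_sum_left]
      rw [Finset.sum_eq_single d0]
      · have he : d0 + (p - 1 - d0) = p - 1 := by omega
        rw [pair_smul_left, pair_mu_eq_psum, he, psum_neg_one (by omega) dvd_rfl]
      · intro d hd hne
        have hd' : p - k ≤ d ∧ d < p := by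
          have := hlsupp hd; simpa [Set.mem_Ico] using this
        rw [pair_smul_left, pair_mu_eq_psum, psum_zero (by omega) ?_, mul_zero]
        intro hdvd
        rcases hdvd with ⟨c, hc⟩
        have hcle : c ≤ 1 := by
          by_contra hgt
          have : (p-1) * 2 ≤ (p-1) * c := Nat.mul_le_mul_left _ (by omega)
          omega
        interval_cases c
        all_goals omega
      · intro hd0'
        exact absurd hd0 hd0'
    rw [pair_add_left, hgz, hlc, zero_add] at key
    rcases mul_eq_zero.mp key with h | h
    · exact h
    · exact absurd h (by norm_num)
  have hl : l = 0 := by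
    ext d
    by_cases hd : d ∈ l.support
    · exact hl0 d hd
    · exact Finsupp.notMem_support_iff.mp hd
  rw [hl, map_zero, add_zero]
  exact hg


open Classical in
noncomputable def chi (S : Set (ZMod p)) : ZMod p → ZMod p := fun x => if x ∈ S then 1 else 0

noncomputable def Pw (S : Set (ZMod p)) (j : ℕ) : ZMod p := pair (chi S) (mu p j)

lemma mu_zero_eq_one : (mu p 0) = (1 : ZMod p → ZMod p) := funext fun x => pow_zero x

lemma chi_triv (S : Set (ZMod p)) (hp2 : p ≠ 2) (h0 : (0 : ZMod p) ∉ S)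
    (hP : ∀ j, 1 ≤ j → j ≤ (p-1)/2 → Pw S j = 0) :
    S = ∅ ∨ S = {x : ZMod p | x ≠ 0} := by
  have hpp : p.Prime := hp.out
  have hp3 : 3 ≤ p := by
    rcases hpp.two_le.lt_or_eq with h | h
    · omega
    · exact absurd h.symm hp2
  have hodd : p % 2 = 1 := Nat.odd_iff.mp (hpp.odd_of_ne_two hp2)
  set H : ℕ := (p-1)/2 with hH
  have h2H : 2 * H = p - 1 := by omega
  have hH1 : 1 ≤ H := by omega
  set u : ZMod p → ZMod p := chi S + Pw S 0 • mu p (p-1) with hu_def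
  have hu : u ∈ V p H := by
    have hperp : u ∈ perp (V p (H+1)) := by
      apply mem_perp_span
      rintro _ ⟨b, hb, rfl⟩
      simp only [Set.mem_Iio] at hb
      rw [hu_def, pair_add_left, pair_smul_left]
      rcases Nat.eq_zero_or_pos b with hb0 | hb0
      · subst hb0
        rw [pair_mu_eq_psum]
        have he : p - 1 + 0 = p - 1 := by omega
        rw [he, psum_neg_one (by omega) dvd_rfl]
        show Pw S 0 + Pw S 0 * (-1) = 0
        ring
      · have h1 : Pw S b = 0 := hP b hb0 (by omega)
        have h2 : pair (mu p (p-1)) (mu p b) = 0 := by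
          rw [pair_mu_eq_psum]
          apply psum_zero (by omega)
          intro hdvd
          have : (p-1) ∣ b := (Nat.dvd_add_right dvd_rfl).mp hdvd
          have := Nat.le_of_dvd hb0 this
          omega
        show Pw S b + Pw S 0 * pair (mu p (p-1)) (mu p b) = 0
        rw [h1, h2, mul_zero, add_zero]
    have hle : perp (V p (H+1)) ≤ V p H := by
      have := perp_V_le (p := p) (k := H+1) (by omega) (by omega)
      have hpH : p - (H+1) = H := by omega
      rwa [hpH] at this
    exact hle hperp
  have hchi0 : chi S 0 = 0 := by simp [chi, h0]
  have hmu0 : mu p (p-1) 0 = 0 := by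
    show (0 : ZMod p) ^ (p-1) = 0
    exact zero_pow (by omega)
  have hu0 : u 0 = 0 := by
    simp only [hu_def, Pi.add_apply, Pi.smul_apply, smul_eq_mul, hchi0, hmu0, mul_zero, add_zero]
  set v : ZMod p → ZMod p := u - Pw S 0 • mu p 0 with hv_def
  have hv : v ∈ V p H := sub_mem hu (Submodule.smul_mem _ _ (mu_mem_V (by omega)))
  have hvx : ∀ x : ZMod p, x ≠ 0 → v x = chi S x := by
    intro x hx
    simp only [hv_def, hu_def, Pi.sub_apply, Pi.add_apply, Pi.smul_apply, smul_eq_mul]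
    show chi S x + Pw S 0 * x ^ (p-1) - Pw S 0 * x ^ 0 = chi S x
    rw [ZMod.pow_card_sub_one_eq_one hx, pow_zero]
    ring
  have hv0 : v 0 = -(Pw S 0) := by
    simp only [hv_def, Pi.sub_apply, Pi.smul_apply, smul_eq_mul, hu0]
    show 0 - Pw S 0 * (0:ZMod p) ^ 0 = -(Pw S 0)
    rw [pow_zero]; ring
  set w : ZMod p → ZMod p := v * (v - 1) with hw_def
  have hw : w ∈ V p (p-2) := by
    have h1 : v - 1 ∈ V p H := by
      refine sub_mem hv ?_
      rw [← mu_zero_eq_one]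
      exact mu_mem_V (by omega)
    have h2 := Submodule.mul_mem_mul hv h1
    rwa [V_mul hH1 hH1, show H + H - 1 = p - 2 by omega] at h2
  have hchi01 : ∀ x : ZMod p, chi S x = 0 ∨ chi S x = 1 := by
    intro x; unfold chi; split <;> simp
  have hwx : ∀ x : ZMod p, x ≠ 0 → w x = 0 := by
    intro x hx
    simp only [hw_def, Pi.mul_apply, Pi.sub_apply, Pi.one_apply, hvx x hx]
    rcases hchi01 x with h | h <;> rw [h] <;> ring
  have hw0 : w 0 = 0 := by
    have hwperp : pair w (mu p 0) = 0 := by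
      have hle : V p (p-2) ≤ perp (V p 2) := V_le_perp (by omega)
      exact mem_perp.mp (hle hw) _ (mu_mem_V (by omega))
    have : pair w (mu p 0) = w 0 := by
      unfold pair
      rw [Finset.sum_eq_single 0]
      · show w 0 * (0:ZMod p)^0 = w 0; rw [pow_zero, mul_one]
      · intro x _ hx; rw [hwx x hx, zero_mul]
      · intro h; exact absurd (Finset.mem_univ _) h
    rw [this] at hwperp; exact hwperp
  have hv01 : ∀ x : ZMod p, v x = 0 ∨ v x = 1 := by
    intro x
    have hwall : w x = 0 := by
      by_cases hx : x = 0
      · rw [hx]; exact hw0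
      · exact hwx x hx
    have : v x * (v x - 1) = 0 := by
      simpa [hw_def, Pi.mul_apply, Pi.sub_apply, Pi.one_apply] using hwall
    rcases mul_eq_zero.mp this with h | h
    · exact Or.inl h
    · exact Or.inr (sub_eq_zero.mp h)
  have hsumv : pair v (mu p 0) = 0 := by
    have hle : V p H ≤ perp (V p 1) := V_le_perp (by omega)
    exact mem_perp.mp (hle hv) _ (mu_mem_V (by omega))
  have hcard : ((Finset.univ.filter (fun x : ZMod p => v x = 1)).card : ZMod p) = 0 := by
    have h1 : pair v (mu p 0) = ∑ x : ZMod p, if v x = 1 then (1:ZMod p) else 0 := by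
      unfold pair
      refine Finset.sum_congr rfl fun x _ => ?_
      show v x * x ^ 0 = _
      rw [pow_zero, mul_one]
      rcases hv01 x with h | h <;> simp [h]
    rw [h1, Finset.sum_boole] at hsumv
    exact_mod_cast hsumv
  have hdvd : p ∣ (Finset.univ.filter (fun x : ZMod p => v x = 1)).card :=
    (ZMod.natCast_eq_zero_iff _ _).mp hcard
  have hcardle : (Finset.univ.filter (fun x : ZMod p => v x = 1)).card ≤ p := by
    calc _ ≤ Finset.univ.card := Finset.card_filter_le _ _
    _ = p := by rw [Finset.card_univ, ZMod.card]
  rcases hdvd with ⟨t, ht⟩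
  have ht1 : t = 0 ∨ t = 1 := by
    by_contra hc
    push_neg at hc
    have h2 : 2 ≤ t := by omega
    have h3 : p * 2 ≤ p * t := Nat.mul_le_mul_left p (by omega)
    omega
  rcases ht1 with ht0 | ht1
  · -- N = 0 : S = ∅
    left
    rw [ht0, mul_zero] at ht
    have hempty : (Finset.univ.filter (fun x : ZMod p => v x = 1)) = ∅ :=
      Finset.card_eq_zero.mp ht
    have hvz : ∀ x : ZMod p, v x = 0 := by
      intro x
      rcases hv01 x with h | h
      · exact h
      · exfalso
        have : x ∈ Finset.univ.filter (fun x : ZMod p => v x = 1) :=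
          Finset.mem_filter.mpr ⟨Finset.mem_univ _, h⟩
        rw [hempty] at this
        exact absurd this (Finset.notMem_empty _)
    have hP0 : Pw S 0 = 0 := by
      have h := hvz 0
      rw [hv0] at h
      exact neg_eq_zero.mp h
    rw [Set.eq_empty_iff_forall_notMem]
    intro x hx
    have hchix : chi S x = 1 := by simp [chi, hx]
    by_cases hx0 : x = 0
    · exact h0 (hx0 ▸ hx)
    · have := hvz x
      rw [hvx x hx0, hchix] at this
      exact one_ne_zero this
  · -- N = p : S = units
    right
    have huniv : (Finset.univ.filter (fun x : ZMod p => v x = 1)) = Finset.univ := by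
      apply Finset.eq_univ_of_card
      rw [ht, ht1, mul_one, ZMod.card]
    have hv1 : ∀ x : ZMod p, v x = 1 := by
      intro x
      have : x ∈ Finset.univ.filter (fun x : ZMod p => v x = 1) := by
        rw [huniv]; exact Finset.mem_univ _
      exact (Finset.mem_filter.mp this).2
    ext x
    simp only [Set.mem_setOf_eq]
    constructor
    · intro hx hx0
      exact h0 (hx0 ▸ hx)
    · intro hx0
      have := hv1 x
      rw [hvx x hx0] at this
      by_contra hxS
      rw [show chi S x = 0 by simp [chi, hxS]] at this
      exact one_ne_zero this.symm

lemma Pw_eq (S : Set (ZMod p)) (j : ℕ) : Pw S j = ∑ s : ZMod p, chi S s * s ^ j := rfl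

/-- the adjacency operator (minus degree times identity) -/
noncomputable def Bop (S : Set (ZMod p)) : (ZMod p → ZMod p) →ₗ[ZMod p] (ZMod p → ZMod p) where
  toFun f := fun x => (∑ s : ZMod p, chi S s * f (x + s)) - Pw S 0 * f x
  map_add' f g := by
    funext x
    simp only [Pi.add_apply, mul_add, Finset.sum_add_distrib]
    ring
  map_smul' c f := by
    funext x
    simp only [Pi.smul_apply, smul_eq_mul, RingHom.id_apply]
    rw [mul_sub, Finset.mul_sum]
    congr 1
    · exact Finset.sum_congr rfl fun s _ => by ring
    · ring

lemma Bop_apply (S : Set (ZMod p)) (f : ZMod p → ZMod p) (x : ZMod p) :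
    Bop S f x = (∑ s : ZMod p, chi S s * f (x + s)) - Pw S 0 * f x := rfl

section Bm
variable {S : Set (ZMod p)} {m : ℕ} (hm1 : 1 ≤ m)
    (hPsm : ∀ j, 1 ≤ j → j < m → Pw S j = 0)

include hm1 hPsm in
lemma Bop_mu (d : ℕ) :
    Bop S (mu p d) = ∑ k ∈ Finset.range (d + 1 - m),
      (((d.choose k : ZMod p)) * Pw S (d - k)) • mu p k := by
  funext x
  rw [Bop_apply]
  have hexp : (∑ s : ZMod p, chi S s * (mu p d) (x + s))
      = ∑ k ∈ Finset.range (d+1), (d.choose k : ZMod p) * Pw S (d-k) * x^k := by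
    have hterm : ∀ s : ZMod p, chi S s * (mu p d) (x + s)
        = ∑ k ∈ Finset.range (d+1), (chi S s * s^(d-k)) * ((d.choose k : ZMod p) * x^k) := by
      intro s
      show chi S s * (x + s)^d = _
      rw [add_pow, Finset.mul_sum]
      exact Finset.sum_congr rfl fun k _ => by ring
    rw [Finset.sum_congr rfl fun s _ => hterm s, Finset.sum_comm]
    refine Finset.sum_congr rfl fun k _ => ?_
    rw [← Finset.sum_mul, Pw_eq]
    ring
  rw [hexp, Finset.sum_range_succ]
  have hdd : (d.choose d : ZMod p) = 1 := by rw [Nat.choose_self, Nat.cast_one]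
  have hPd : Pw S (d - d) = Pw S 0 := by rw [Nat.sub_self]
  rw [hdd, hPd, one_mul]
  have hmu : (mu p d) x = x ^ d := rfl
  rw [hmu, add_sub_cancel_right]
  have hsplit : ∑ k ∈ Finset.range d, (d.choose k : ZMod p) * Pw S (d-k) * x^k
      = ∑ k ∈ Finset.range (d+1-m), (d.choose k : ZMod p) * Pw S (d-k) * x^k := by
    rw [Finset.range_eq_Ico,
      ← Finset.sum_Ico_consecutive _ (Nat.zero_le (d+1-m)) (by omega : d+1-m ≤ d)]
    have hzero : ∑ k ∈ Finset.Ico (d+1-m) d, (d.choose k : ZMod p) * Pw S (d-k) * x^k = 0 := by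
      apply Finset.sum_eq_zero
      intro k hk
      rw [Finset.mem_Ico] at hk
      rw [hPsm (d-k) (by omega) (by omega), mul_zero, zero_mul]
    rw [hzero, add_zero]
    rw [Finset.range_eq_Ico]
  rw [hsplit, Finset.sum_apply]
  exact Finset.sum_congr rfl fun k _ => by
    rw [Pi.smul_apply, smul_eq_mul]
    rfl

include hm1 hPsm in
lemma map_Bop_V (hPm : Pw S m ≠ 0) {n : ℕ} (hmn : m ≤ n) (hnp : n ≤ p) :
    Submodule.map (Bop S) (V p n) = V p (n - m) := by
  apply le_antisymm
  · show Submodule.map (Bop S) (V p n) ≤ V p (n - m)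
    unfold V
    rw [Submodule.map_span, Submodule.span_le]
    rintro _ ⟨_, ⟨d, hd, rfl⟩, rfl⟩
    simp only [Set.mem_Iio] at hd
    rw [SetLike.mem_coe, Bop_mu hm1 hPsm]
    refine Submodule.sum_mem _ fun k hk => Submodule.smul_mem _ _ (mu_mem_V ?_)
    rw [Finset.mem_range] at hk
    omega
  · have key : ∀ c, c < n - m → mu p c ∈ Submodule.map (Bop S) (V p n) := by
      intro c
      induction c using Nat.strong_induction_on with
      | _ c IH =>
        intro hc
        have hBmu := Bop_mu (S := S) hm1 hPsm (c + m)
        rw [show c + m + 1 - m = c + 1 by omega, Finset.sum_range_succ,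
          show c + m - c = m by omega] at hBmu
        set coef : ZMod p := ((c+m).choose c : ZMod p) * Pw S m with hcoef_def
        have hchoose : (((c+m).choose c : ℕ) : ZMod p) ≠ 0 := by
          intro hcast
          have hdvd : p ∣ (c+m).choose c := (ZMod.natCast_eq_zero_iff _ _).mp hcast
          have hdvd2 : (c+m).choose c ∣ Nat.factorial (c+m) :=
            ⟨Nat.factorial c * Nat.factorial m, by
              rw [← Nat.choose_mul_factorial_mul_factorial (show c ≤ c+m by omega),
                show c+m-c = m by omega]
              ring⟩
          have : p ∣ Nat.factorial (c+m) := dvd_trans hdvd hdvd2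
          have := (Nat.Prime.dvd_factorial hp.out).mp this
          omega
        have hcoef : coef ≠ 0 := mul_ne_zero hchoose hPm
        have hTmem : ∑ k ∈ Finset.range c, (((c+m).choose k : ZMod p) * Pw S (c+m-k)) • mu p k
            ∈ Submodule.map (Bop S) (V p n) :=
          Submodule.sum_mem _ fun k hk => by
            have hk' : k < c := Finset.mem_range.mp hk
            exact Submodule.smul_mem _ _ (IH k hk' (by omega))
        have hBmem : Bop S (mu p (c+m)) ∈ Submodule.map (Bop S) (V p n) :=
          Submodule.mem_map_of_mem (mu_mem_V (by omega))
        have hsub : coef • mu p c = Bop S (mu p (c+m))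
            - ∑ k ∈ Finset.range c, (((c+m).choose k : ZMod p) * Pw S (c+m-k)) • mu p k := by
          rw [hBmu, add_sub_cancel_left]
        have hmem2 : coef • mu p c ∈ Submodule.map (Bop S) (V p n) := by
          rw [hsub]; exact sub_mem hBmem hTmem
        have : mu p c = coef⁻¹ • (coef • mu p c) := by
          rw [smul_smul, inv_mul_cancel₀ hcoef, one_smul]
        rw [this]
        exact Submodule.smul_mem _ _ hmem2
    unfold V
    rw [Submodule.span_le]
    rintro _ ⟨c, hc, rfl⟩
    simp only [Set.mem_Iio] at hc
    exact key c hc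

end Bm


lemma isCircAut_symm {X : SimpleGraph (ZMod p)} {σ : Equiv.Perm (ZMod p)}
    (hσ : IsCircAut X σ) : IsCircAut X σ.symm := by
  intro i j
  have := (hσ (σ.symm i) (σ.symm j)).symm
  simpa using this

lemma main0 (X : SimpleGraph (ZMod p)) (S : Set (ZMod p))
    (hS : ∀ i j : ZMod p, X.Adj i j ↔ j - i ∈ S)
    (hne : S.Nonempty) (hnc : S ≠ {x : ZMod p | x ≠ 0})
    (σ : Equiv.Perm (ZMod p)) (hσ : IsCircAut X σ) (h0 : σ 0 = 0) :
    ∃ a : ZMod p, a ≠ 0 ∧ ∀ x, σ x = a * x := by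
  classical
  haveI : Fact (1 < p) := ⟨hp.out.one_lt⟩
  have h0S : (0 : ZMod p) ∉ S := by
    intro h
    exact X.irrefl ((hS 0 0).mpr (by simpa using h))
  have hp2' : p ≠ 2 := by
    intro hp2
    subst hp2
    have hall : ∀ y : ZMod 2, y = 0 ∨ y = 1 := by
      intro y
      rcases y with ⟨v, hv⟩
      interval_cases v
      · exact Or.inl rfl
      · exact Or.inr rfl
    apply hnc
    ext x
    simp only [Set.mem_setOf_eq]
    constructor
    · intro hx hx0; exact h0S (hx0 ▸ hx)
    · intro hx0
      obtain ⟨s, hs⟩ := hne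
      have hs1 : s = 1 := by
        rcases hall s with h | h
        · exact absurd (h ▸ hs) h0S
        · exact h
      have hx1 : x = 1 := by
        rcases hall x with h | h
        · exact absurd h hx0
        · exact h
      rw [hx1, ← hs1]; exact hs
  have hpodd : p % 2 = 1 := Nat.odd_iff.mp (hp.out.odd_of_ne_two hp2')
  have hp3 : 3 ≤ p := by have := hp.out.two_le; omega
  have hσs : IsCircAut X σ.symm := isCircAut_symm hσ
  -- chi equivariance
  have hbij : ∀ (τ : Equiv.Perm (ZMod p)), IsCircAut X τ → ∀ x z : ZMod p,
      chi S (τ.symm z - x) = chi S (z - τ x) := by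
    intro τ hτ x z
    have hiff : τ.symm z - x ∈ S ↔ z - τ x ∈ S := by
      rw [← hS x (τ.symm z), ← hS (τ x) z, ← hτ x (τ.symm z), Equiv.apply_symm_apply]
    simp only [chi]
    rw [if_congr hiff rfl rfl]
  -- commuting
  have hcomm : ∀ (τ : Equiv.Perm (ZMod p)), IsCircAut X τ → ∀ f : ZMod p → ZMod p,
      Bop S (fun x => f (τ x)) = fun x => Bop S f (τ x) := by
    intro τ hτ f
    funext x
    rw [Bop_apply, Bop_apply]
    congr 1
    have e1 : ∑ s : ZMod p, chi S s * f (τ (x + s))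
        = ∑ y : ZMod p, chi S (y - x) * f (τ y) := by
      rw [← Equiv.sum_comp (Equiv.addLeft x) (fun y => chi S (y - x) * f (τ y))]
      refine Finset.sum_congr rfl fun s _ => ?_
      simp
    have e2 : ∑ y : ZMod p, chi S (y - x) * f (τ y)
        = ∑ z : ZMod p, chi S (τ.symm z - x) * f z := by
      rw [← Equiv.sum_comp τ (fun z => chi S (τ.symm z - x) * f z)]
      refine Finset.sum_congr rfl fun y _ => ?_
      simp
    have e3 : ∑ z : ZMod p, chi S (τ.symm z - x) * f z
        = ∑ z : ZMod p, chi S (z - τ x) * f z :=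
      Finset.sum_congr rfl fun z _ => by rw [hbij τ hτ x z]
    have e4 : ∑ z : ZMod p, chi S (z - τ x) * f z
        = ∑ s : ZMod p, chi S s * f (τ x + s) := by
      rw [← Equiv.sum_comp (Equiv.addLeft (τ x)) (fun z => chi S (z - τ x) * f z)]
      refine Finset.sum_congr rfl fun s _ => ?_
      simp
    rw [e1, e2, e3, e4]
  -- minimal nonvanishing power sum
  have hPex : ∃ j, 1 ≤ j ∧ Pw S j ≠ 0 := by
    by_contra hcon
    push_neg at hcon
    rcases chi_triv S hp2' h0S (fun j hj1 _ => hcon j hj1) with h | h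
    · obtain ⟨s, hs⟩ := hne
      rw [h] at hs
      exact hs
    · exact hnc h
  set m := Nat.find hPex with hm_def
  have hmspec := Nat.find_spec hPex
  have hm1 : 1 ≤ m := hmspec.1
  have hPm : Pw S m ≠ 0 := hmspec.2
  have hPsm : ∀ j, 1 ≤ j → j < m → Pw S j = 0 := by
    intro j hj1 hjm
    by_contra hne'
    have hle : m ≤ j := Nat.find_le ⟨hj1, hne'⟩
    omega
  have hmH : m ≤ (p-1)/2 := by
    by_contra hcon
    push_neg at hcon
    have hvan : ∀ j, 1 ≤ j → j ≤ (p-1)/2 → Pw S j = 0 := by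
      intro j hj1 hj2
      have hjlt : j < m := by omega
      exact hPsm j hj1 hjlt
    rcases chi_triv S hp2' h0S hvan with h | h
    · obtain ⟨s, hs⟩ := hne
      rw [h] at hs
      exact hs
    · exact hnc h
  have h2m : m * 2 ≤ p - 1 := (Nat.le_div_iff_mul_le two_pos).mp hmH
  -- invariance machinery
  let Inv : Submodule (ZMod p) (ZMod p → ZMod p) → Prop := fun W =>
    (∀ f ∈ W, (fun x => f (σ x)) ∈ W) ∧ (∀ f ∈ W, (fun x => f (σ.symm x)) ∈ W)
  have hInvMap : ∀ W, Inv W → Inv (Submodule.map (Bop S) W) := by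
    intro W hW
    constructor
    · rintro _ ⟨g, hg, rfl⟩
      have : (fun x => Bop S g (σ x)) = Bop S (fun x => g (σ x)) := (hcomm σ hσ g).symm
      rw [this]
      exact Submodule.mem_map_of_mem (hW.1 g hg)
    · rintro _ ⟨g, hg, rfl⟩
      have : (fun x => Bop S g (σ.symm x)) = Bop S (fun x => g (σ.symm x)) :=
        (hcomm σ.symm hσs g).symm
      rw [this]
      exact Submodule.mem_map_of_mem (hW.2 g hg)
  have hInvPerp : ∀ W, Inv W → Inv (perp W) := by
    intro W hW
    constructor
    · intro f hf
      rw [mem_perp]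
      intro g hg
      have : pair (fun x => f (σ x)) g = pair f (fun y => g (σ.symm y)) := by
        unfold pair
        rw [← Equiv.sum_comp σ (fun y => f y * g (σ.symm y))]
        exact Finset.sum_congr rfl fun x _ => by simp
      rw [this]
      exact mem_perp.mp hf _ (hW.2 g hg)
    · intro f hf
      rw [mem_perp]
      intro g hg
      have : pair (fun x => f (σ.symm x)) g = pair f (fun y => g (σ y)) := by
        unfold pair
        rw [← Equiv.sum_comp σ.symm (fun y => f y * g (σ y))]
        exact Finset.sum_congr rfl fun x _ => by simp
      rw [this]
      exact mem_perp.mp hf _ (hW.1 g hg)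
  have hInvMul : ∀ W1 W2, Inv W1 → Inv W2 → Inv (W1 * W2) := by
    intro W1 W2 h1 h2
    constructor
    · intro f hf
      refine Submodule.mul_induction_on hf ?_ ?_
      · intro a ha b hb
        exact Submodule.mul_mem_mul (h1.1 a ha) (h2.1 b hb)
      · intro a b ha hb
        exact add_mem ha hb
    · intro f hf
      refine Submodule.mul_induction_on hf ?_ ?_
      · intro a ha b hb
        exact Submodule.mul_mem_mul (h1.2 a ha) (h2.2 b hb)
      · intro a b ha hb
        exact add_mem ha hb
  have hInvVpp : Inv (V p p) := ⟨fun f _ => top_le_V _, fun f _ => top_le_V _⟩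
  -- the chain
  have hmap1 : Submodule.map (Bop S) (V p p) = V p (p - m) :=
    map_Bop_V hm1 hPsm hPm (by omega) (le_refl p)
  have hInv_pm : Inv (V p (p - m)) := hmap1 ▸ hInvMap _ hInvVpp
  have hperp1 : perp (V p (p - m)) = V p m := by
    apply le_antisymm
    · have h := perp_V_le (p := p) (k := p - m) (by omega) (by omega)
      rwa [show p - (p - m) = m by omega] at h
    · exact V_le_perp (by omega)
  have hInv_m : Inv (V p m) := hperp1 ▸ hInvPerp _ hInv_pm
  have hmap2 : Submodule.map (Bop S) (V p (p - m)) = V p (p - m - m) :=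
    map_Bop_V hm1 hPsm hPm (by omega) (by omega)
  have hInv_p2m : Inv (V p (p - m - m)) := hmap2 ▸ hInvMap _ hInv_pm
  have hmulA : V p m * V p (p - m - m) = V p (p - m - 1) := by
    rw [V_mul hm1 (by omega), show m + (p - m - m) - 1 = p - m - 1 by omega]
  have hInv_X1 : Inv (V p (p - m - 1)) := hmulA ▸ hInvMul _ _ hInv_m hInv_p2m
  have hmulB : V p m * V p (p - m - 1) = V p (p - 2) := by
    rw [V_mul hm1 (by omega), show m + (p - m - 1) - 1 = p - 2 by omega]
  have hInv_X2 : Inv (V p (p - 2)) := hmulB ▸ hInvMul _ _ hInv_m hInv_X1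
  have hperp2 : perp (V p (p - 2)) = V p 2 := by
    apply le_antisymm
    · have h := perp_V_le (p := p) (k := p - 2) (by omega) (by omega)
      rwa [show p - (p - 2) = 2 by omega] at h
    · exact V_le_perp (by omega)
  have hInv_V2 : Inv (V p 2) := hperp2 ▸ hInvPerp _ hInv_X2
  -- conclusion
  have hσV2 : (fun x => mu p 1 (σ x)) ∈ V p 2 := hInv_V2.1 _ (mu_mem_V one_lt_two)
  have hfun : (fun x => mu p 1 (σ x)) = fun x => σ x := by
    funext x; exact pow_one _
  rw [hfun] at hσV2
  have himg : mu p '' Set.Iio 2 = {mu p 0, mu p 1} := by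
    ext f
    constructor
    · rintro ⟨d, hd, rfl⟩
      have hd2 : d < 2 := hd
      interval_cases d
      · exact Or.inl rfl
      · exact Or.inr rfl
    · rintro (rfl | rfl)
      · exact ⟨0, by norm_num, rfl⟩
      · exact ⟨1, by norm_num, rfl⟩
  have hspan : (fun x => σ x) ∈ Submodule.span (ZMod p) {mu p 0, mu p 1} := by
    have : V p 2 = Submodule.span (ZMod p) {mu p 0, mu p 1} := by
      unfold V; rw [himg]
    rwa [this] at hσV2
  obtain ⟨c, a, hca⟩ := Submodule.mem_span_pair.mp hspan
  have hc0 : c = 0 := by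
    have := congr_fun hca 0
    simp only [Pi.add_apply, Pi.smul_apply, smul_eq_mul, h0] at this
    have hmu00 : mu p 0 (0:ZMod p) = 1 := pow_zero _
    have hmu10 : mu p 1 (0:ZMod p) = 0 := pow_one _
    rw [hmu00, hmu10, mul_one, mul_zero, add_zero] at this
    exact this
  have hax : ∀ x : ZMod p, σ x = a * x := by
    intro x
    have := congr_fun hca x
    simp only [Pi.add_apply, Pi.smul_apply, smul_eq_mul] at this
    have hmu0 : mu p 0 x = 1 := pow_zero _
    have hmu1 : mu p 1 x = x := pow_one _
    rw [hmu0, hmu1, hc0, zero_mul, zero_add] at this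
    exact this.symm
  refine ⟨a, ?_, hax⟩
  intro ha0
  have h1 : σ 1 = 0 := by rw [hax 1, ha0, zero_mul]
  have : (1 : ZMod p) = 0 := σ.injective (by rw [h1, h0])
  exact one_ne_zero this


end C10

/-- For a nontrivial circulant `p`-graph `X` and every vertex `i`, the map
`Φ_i : E → Aut_i(X)`, `e ↦ (x ↦ i + e(x − i))`, is a group isomorphism from `E` onto the
stabilizer of `i` in `Aut(X)`: it lands in the stabilizer, is multiplicative, injective on
`E`, and surjects onto the stabilizer. -/
theorem stmt10 {p : ℕ} [Fact p.Prime]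
    (X : SimpleGraph (ZMod p)) (S : Set (ZMod p))
    (hS : ∀ i j : ZMod p, X.Adj i j ↔ j - i ∈ S)
    (hne : S.Nonempty) (hnc : S ≠ {x : ZMod p | x ≠ 0})
    (E : Subgroup (ZMod p)ˣ)
    (hE : ∀ a : (ZMod p)ˣ, a ∈ E ↔ (fun s => (a : ZMod p) * s) '' S = S)
    (i : ZMod p) :
    (∀ (a : (ZMod p)ˣ) (x : ZMod p), Phi i a x = i + (a : ZMod p) * (x - i)) ∧
    (∀ a ∈ E, IsCircAut X (Phi i a) ∧ Phi i a i = i) ∧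
    (∀ a ∈ E, ∀ b ∈ E, Phi i (a * b) = Phi i a * Phi i b) ∧
    (∀ a ∈ E, ∀ b ∈ E, Phi i a = Phi i b → a = b) ∧
    (∀ σ : Equiv.Perm (ZMod p), IsCircAut X σ → σ i = i → ∃ a ∈ E, Phi i a = σ) := by
  classical
  have hPhi : ∀ (a : (ZMod p)ˣ) (x : ZMod p), Phi i a x = i + (a : ZMod p) * (x - i) :=
    fun a x => rfl
  refine ⟨hPhi, ?_, ?_, ?_, ?_⟩
  · -- automorphism and fixes i
    intro a ha
    have hmem := (hE a).mp ha
    have hiff : ∀ t : ZMod p, t ∈ S ↔ (a : ZMod p) * t ∈ S := by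
      intro t
      constructor
      · intro ht
        rw [← hmem]
        exact ⟨t, ht, rfl⟩
      · intro ht
        rw [← hmem] at ht
        obtain ⟨t', ht', htt⟩ := ht
        have : t' = t := mul_left_cancel₀ a.ne_zero htt
        exact this ▸ ht'
    constructor
    · intro x y
      rw [hS, hS]
      have hdiff : Phi i a y - Phi i a x = (a : ZMod p) * (y - x) := by
        rw [hPhi, hPhi]; ring
      rw [hdiff]
      exact (hiff (y - x)).symm
    · rw [hPhi]
      rw [sub_self, mul_zero, add_zero]
  · -- multiplicative
    intro a _ b _
    ext x
    rw [Equiv.Perm.mul_apply, hPhi, hPhi, hPhi, Units.val_mul]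
    ring
  · -- injective
    intro a _ b _ h
    apply Units.ext
    have h1 := congr_arg (fun σ : Equiv.Perm (ZMod p) => σ (i + 1)) h
    simp only [hPhi] at h1
    rw [add_sub_cancel_left] at h1
    rw [mul_one, mul_one] at h1
    exact add_left_cancel h1
  · -- surjective onto the stabilizer
    intro σ hσ hi
    set σ' : Equiv.Perm (ZMod p) := (Equiv.addLeft i).trans (σ.trans (Equiv.addLeft (-i)))
      with hσ'def
    have hσ'x : ∀ x, σ' x = -i + σ (i + x) := fun x => rfl
    have hσ' : IsCircAut X σ' := by
      intro x y
      rw [hS, hS]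
      have h1 : σ' y - σ' x = σ (i + y) - σ (i + x) := by
        rw [hσ'x, hσ'x]; ring
      rw [h1]
      have h2 := hσ (i + x) (i + y)
      rw [hS (σ (i+x)) (σ (i+y)), hS (i+x) (i+y)] at h2
      rw [h2]
      have h3 : i + y - (i + x) = y - x := by ring
      rw [h3]
    have hσ'0 : σ' 0 = 0 := by
      rw [hσ'x, add_zero, hi]
      ring
    obtain ⟨a, ha0, hax⟩ := C10.main0 X S hS hne hnc σ' hσ' hσ'0
    have hiff : ∀ t : ZMod p, t ∈ S ↔ a * t ∈ S := by
      intro t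
      have hAdj := hσ' 0 t
      rw [hσ'0, hax t] at hAdj
      rw [hS, hS, sub_zero, sub_zero] at hAdj
      exact hAdj.symm
    refine ⟨Units.mk0 a ha0, ?_, ?_⟩
    · rw [hE]
      ext y
      simp only [Units.val_mk0]
      constructor
      · rintro ⟨t, ht, rfl⟩
        exact (hiff t).mp ht
      · intro hy
        refine ⟨a⁻¹ * y, ?_, ?_⟩
        · apply (hiff _).mpr
          rw [mul_inv_cancel_left₀ ha0]
          exact hy
        · show a * (a⁻¹ * y) = y
          rw [mul_inv_cancel_left₀ ha0]
    · ext x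
      rw [hPhi]
      simp only [Units.val_mk0]
      have h := hax (x - i)
      rw [hσ'x, show i + (x - i) = x by ring] at h
      rw [← h]
      ring
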